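/- Let G be a connected claw-free graph, S a minimal vertex separator of G, s a vertex of S, and K a connected component of G - S. Then the set of neighbours of s lying in K induces a complete subgraph of G. -/

import Mathlib

open SimpleGraph

/-- The claw `K_{1,3}`: vertex `0` is the centre, adjacent to `1`, `2`, `3`. -/
def claw : SimpleGraph (Fin 4) := SimpleGraph.fromRel (fun a _ => a = 0)

/-- The paw: a triangle on `1, 2, 3` with pendant vertex `0` attached to `1`. -/
def paw : SimpleGraph (Fin 4) :=
  SimpleGraph.fromRel (fun a b => (a = 0 ∧ b = 1) ∨ (a ≠ 0 ∧ b ≠ 0))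

/-- `G` is `H`-free: no induced subgraph of `G` is isomorphic to `H`.
(`H ↪g G` is a graph embedding, i.e. an isomorphism onto an induced subgraph.) -/
def HFree {W V : Type*} (H : SimpleGraph W) (G : SimpleGraph V) : Prop :=
  ¬ Nonempty (H ↪g G)

/-- `G` is 2-connected: at least 3 vertices, connected, and deleting any vertex
leaves it connected. -/
def TwoConnected {V : Type*} (G : SimpleGraph V) : Prop :=
  (∃ a b c : V, a ≠ b ∧ a ≠ c ∧ b ≠ c) ∧ G.Connected ∧
    ∀ v : V, (G.induce {u | u ≠ v}).Connected

/-- The hypothesis that every induced paw of `G`, with pendant vertex `a₁` adjacent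
precisely to the triangle vertex `a₀`, satisfies `φ(a₁,b₁)` or `φ(a₁,b₂)`:
`a₁` has a common neighbour outside the paw with `b₁` or with `b₂`. -/
def PawCondition {V : Type*} (G : SimpleGraph V) : Prop :=
  ∀ a₁ a₀ b₁ b₂ : V,
    G.Adj a₁ a₀ → G.Adj a₀ b₁ → G.Adj a₀ b₂ → G.Adj b₁ b₂ →
    ¬ G.Adj a₁ b₁ → ¬ G.Adj a₁ b₂ → a₁ ≠ b₁ → a₁ ≠ b₂ →
    ∃ x, x ∉ ({a₁, a₀, b₁, b₂} : Set V) ∧ G.Adj x a₁ ∧ (G.Adj x b₁ ∨ G.Adj x b₂)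

/-- A ray (one-way infinite path) in `G`, given by its sequence of vertices. -/
def IsRay {V : Type*} (G : SimpleGraph V) (f : ℕ → V) : Prop :=
  Function.Injective f ∧ ∀ n, G.Adj (f n) (f (n + 1))

/-- Two rays are equivalent (belong to the same end) if no finite vertex set
separates them. -/
def EndEquiv {V : Type*} (G : SimpleGraph V) (f g : ℕ → V) : Prop :=
  ∀ S : Set V, S.Finite →
    ∃ (m n : ℕ) (p : G.Walk (f m) (g n)), ∀ x ∈ p.support, x ∉ S

/-- The ends of `G`, as equivalence classes of rays. -/
def Ends {V : Type*} (G : SimpleGraph V) : Type _ :=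
  Quot (fun f g : {f : ℕ → V // IsRay G f} => EndEquiv G f.1 g.1)

/-- The edge cut `δ(X)`. -/
def edgeCut {V : Type*} (G : SimpleGraph V) (X : Set V) : Set (Sym2 V) :=
  {e | e ∈ G.edgeSet ∧ ∃ a b, e = s(a, b) ∧ a ∈ X ∧ b ∉ X}

/-- `G` has a Hamilton circle in its Freudenthal compactification `|G|`,
expressed combinatorially: there is a spanning edge set `C` in which every
vertex has degree exactly `2` and which meets every finite cut of `G` in a
positive even number of edges (for locally finite connected `G` this
characterises edge sets whose closure in `|G|` is a circle through all
vertices). -/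
def HasHamiltonCircle {V : Type*} (G : SimpleGraph V) : Prop :=
  ∃ C ⊆ G.edgeSet, (∀ v : V, {e ∈ C | v ∈ e}.ncard = 2) ∧
    ∀ X : Set V, X.Nonempty → Xᶜ.Nonempty → (edgeCut G X).Finite →
      (C ∩ edgeCut G X).Nonempty ∧ Even ((C ∩ edgeCut G X).ncard)

/-- The end represented by the ray `g` lies in the closure (in `|G|`) of the
vertex set `M`: for every finite `S`, the component of `G - S` containing a
tail of `g` meets `M`. -/
def EndInClosure {V : Type*} (G : SimpleGraph V) (g : ℕ → V) (M : Set V) : Prop :=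
  ∀ S : Set V, S.Finite → ∃ u ∈ M, ∃ N : ℕ, ∀ n ≥ N,
    ∃ p : G.Walk u (g n), ∀ x ∈ p.support, x ∉ S

/-- `S` is a vertex separator of `G`: `G - S` is disconnected. -/
def IsSeparator {V : Type*} (G : SimpleGraph V) (S : Set V) : Prop :=
  ∃ (u : V) (hu : u ∉ S) (v : V) (hv : v ∉ S),
    ¬ (G.induce {x | x ∉ S}).Reachable ⟨u, hu⟩ ⟨v, hv⟩

/-- `S` is a minimal vertex separator of `G`. -/
def IsMinSeparator {V : Type*} (G : SimpleGraph V) (S : Set V) : Prop :=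
  IsSeparator G S ∧ ∀ T ⊂ S, ¬ IsSeparator G T

/-- The `k`-blow-up of `G`: each vertex is replaced by a `k`-clique. -/
def blowup {V : Type*} (G : SimpleGraph V) (k : ℕ) : SimpleGraph (V × Fin k) where
  Adj x y := (x.1 = y.1 ∧ x.2 ≠ y.2) ∨ G.Adj x.1 y.1
  symm := by
    constructor
    rintro x y (⟨h1, h2⟩ | h)
    · exact Or.inl ⟨h1.symm, h2.symm⟩
    · exact Or.inr h.symm
  loopless := by
    constructor
    rintro x (⟨_, h⟩ | h)
    · exact h rfl
    · exact G.irrefl h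

/-- for a minimal separator `S` of a connected claw-free graph, a vertex
`s ∈ S` and a component `K` of `G - S`, the neighbours of `s` in `K` induce a complete graph. -/
theorem stmt_2 {V : Type} (G : SimpleGraph V) (hconn : G.Connected) (hclaw : HFree claw G)
    (S : Set V) (hS : IsMinSeparator G S) (s : V) (hs : s ∈ S)
    (K : (G.induce {x | x ∉ S}).ConnectedComponent) :
    ∀ u v : V, u ≠ v → G.Adj s u → G.Adj s v →
      (∃ hu : u ∉ S, (G.induce {x | x ∉ S}).connectedComponentMk ⟨u, hu⟩ = K) →
      (∃ hv : v ∉ S, (G.induce {x | x ∉ S}).connectedComponentMk ⟨v, hv⟩ = K) →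
      G.Adj u v := by
  intro u v huv hsu hsv ⟨hu, hKu⟩ ⟨hv, hKv⟩
  by_contra hadj
  -- Since S \ {s} is a proper subset of S, it is not a separator.
  have hT : ¬ IsSeparator G (S \ {s}) :=
    hS.2 _ ⟨Set.diff_subset, fun h => (h hs).2 rfl⟩
  simp only [IsSeparator, not_exists, not_not] at hT
  -- Get a vertex y outside S whose component is not K.
  obtain ⟨x, hx, y, hy, hxy⟩ := hS.1
  have hexy : ∃ (y : V) (hy : y ∉ S),
      (G.induce {x | x ∉ S}).connectedComponentMk ⟨y, hy⟩ ≠ K := by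
    by_cases hcx : (G.induce {x | x ∉ S}).connectedComponentMk ⟨x, hx⟩ = K
    · refine ⟨y, hy, fun hcy => hxy ?_⟩
      exact SimpleGraph.ConnectedComponent.eq.mp (hcx.trans hcy.symm)
    · exact ⟨x, hx, hcx⟩
  obtain ⟨y, hy', hKy⟩ := hexy
  -- There is a walk from y to u avoiding S \ {s}.
  have hyT : y ∈ {x | x ∉ S \ {s}} := fun h => hy' h.1
  have huT : u ∈ {x | x ∉ S \ {s}} := fun h => hu h.1
  obtain ⟨p⟩ := hT y hyT u huT
  -- Along this walk, find a neighbour w of s outside S with component ≠ K.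
  have key : ∀ (a b : {x // x ∈ {x | x ∉ S \ {s}}})
      (p : (G.induce {x | x ∉ S \ {s}}).Walk a b), (b : V) = u →
      ∀ (ha : (a : V) ∉ S), (G.induce {x | x ∉ S}).connectedComponentMk ⟨a, ha⟩ ≠ K →
      ∃ (w : V) (hw : w ∉ S), G.Adj s w ∧
        (G.induce {x | x ∉ S}).connectedComponentMk ⟨w, hw⟩ ≠ K := by
    intro a b p
    induction p with
    | nil =>
      intro hbu ha hne
      exact absurd hKu (by
        have : (G.induce {x | x ∉ S}).connectedComponentMk ⟨u, hu⟩ =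
            (G.induce {x | x ∉ S}).connectedComponentMk ⟨(_ : V), ha⟩ := by
          congr 1
          exact Subtype.ext hbu.symm
        rw [this]; exact hne)
    | @cons a b c h q ih =>
      intro hcu ha hne
      have hb : (b : V) ∉ S ∨ (b : V) = s := by
        rcases b with ⟨b, hbmem⟩
        by_cases hbs : b = s
        · exact Or.inr hbs
        · exact Or.inl fun hbS => hbmem ⟨hbS, hbs⟩
      have hadjab : G.Adj (a : V) (b : V) := h
      rcases hb with hbS | hbs
      · have hcomp : (G.induce {x | x ∉ S}).connectedComponentMk ⟨(b : V), hbS⟩ =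
            (G.induce {x | x ∉ S}).connectedComponentMk ⟨(a : V), ha⟩ := by
          apply SimpleGraph.ConnectedComponent.sound
          exact (SimpleGraph.Adj.reachable
            (by exact hadjab.symm : (G.induce {x | x ∉ S}).Adj ⟨b, hbS⟩ ⟨a, ha⟩))
        exact ih hcu hbS (hcomp.trans_ne hne)
      · refine ⟨a, ha, ?_, hne⟩
        have := hadjab.symm
        rw [hbs] at this
        exact this
  obtain ⟨w, hw, hsw, hKw⟩ := key ⟨y, hyT⟩ ⟨u, huT⟩ p rfl hy' hKy
  -- Distinctness and non-adjacency facts.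
  have hnotadj : ∀ (a : V) (haS : a ∉ S),
      (G.induce {x | x ∉ S}).connectedComponentMk ⟨a, haS⟩ = K → ¬ G.Adj a w := by
    intro a haS hKa hA
    apply hKw
    rw [← hKa]
    apply SimpleGraph.ConnectedComponent.sound
    exact SimpleGraph.Adj.reachable
      (by exact hA.symm : (G.induce {x | x ∉ S}).Adj ⟨w, hw⟩ ⟨a, haS⟩)
  have huw : ¬ G.Adj u w := hnotadj u hu hKu
  have hvw : ¬ G.Adj v w := hnotadj v hv hKv
  have hneuw : u ≠ w := by rintro rfl; exact hKw hKu
  have hnevw : v ≠ w := by rintro rfl; exact hKw hKv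
  have hnsu : s ≠ u := hsu.ne
  have hnsv : s ≠ v := hsv.ne
  have hnsw : s ≠ w := hsw.ne
  have hus : G.Adj u s := hsu.symm
  have hvs2 : G.Adj v s := hsv.symm
  have hws : G.Adj w s := hsw.symm
  have hvu : ¬ G.Adj v u := fun h => hadj h.symm
  have hwu : ¬ G.Adj w u := fun h => huw h.symm
  have hwv : ¬ G.Adj w v := fun h => hvw h.symm
  have hca : ∀ a b : Fin 4, claw.Adj a b ↔ (a ≠ b ∧ (a = 0 ∨ b = 0)) := by
    intro a b
    simp [claw, SimpleGraph.fromRel_adj]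
  -- Build the claw embedding.
  refine hclaw ⟨⟨⟨![s, u, v, w], ?_⟩, ?_⟩⟩
  · intro a b hab
    fin_cases a <;> fin_cases b <;> (try simp at hab) <;>
      first
        | rfl
        | exact absurd hab hnsu
        | exact absurd hab hnsv
        | exact absurd hab hnsw
        | exact absurd hab huv
        | exact absurd hab hneuw
        | exact absurd hab hnevw
        | exact absurd hab hnsu.symm
        | exact absurd hab hnsv.symm
        | exact absurd hab hnsw.symm
        | exact absurd hab huv.symm
        | exact absurd hab hneuw.symm
        | exact absurd hab hnevw.symm
  · intro a b
    show G.Adj (![s, u, v, w] a) (![s, u, v, w] b) ↔ claw.Adj a b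
    rw [hca]
    fin_cases a <;> fin_cases b <;> simp <;> assumption
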